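/- If ρ₁, …, ρₙ are nonnegative and not all zero, then the effective sample size of the self-normalized importance sampling estimator is at least that of the squared-weight (V-trace) estimator: n_eff^ρ = (Σᵢ ρᵢ)² / (Σᵢ ρᵢ²) ≥ (Σᵢ ρᵢ²)² / (Σᵢ ρᵢ⁴) = n_eff^{ρ²}. -/
import Mathlib


/-- If the nonnegative weights `ρᵢ` are not all zero, the effective sample size of the
self-normalized importance sampling estimator dominates that of the squared-weight
(V-trace) estimator: `(Σᵢ ρᵢ²)² / (Σᵢ ρᵢ⁴) ≤ (Σᵢ ρᵢ)² / (Σᵢ ρᵢ²)`. -/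
theorem ess_self_normalized_ge_ess_squared (n : ℕ) (hn : 1 ≤ n) (ρ : Fin n → ℝ)
    (hρ : ∀ i, 0 ≤ ρ i) (hne : ∃ i, ρ i ≠ 0) :
    (∑ i, (ρ i) ^ 2) ^ 2 / (∑ i, (ρ i) ^ 4)
      ≤ (∑ i, ρ i) ^ 2 / (∑ i, (ρ i) ^ 2) := by
  obtain ⟨j, hj⟩ := hne
  set A := ∑ i, ρ i with hA
  set B := ∑ i, (ρ i) ^ 2 with hB
  set C := ∑ i, (ρ i) ^ 3 with hC
  set D := ∑ i, (ρ i) ^ 4 with hD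
  have hBpos : 0 < B := Finset.sum_pos' (fun i _ => sq_nonneg _)
    ⟨j, Finset.mem_univ j, by positivity⟩
  have hDpos : 0 < D := Finset.sum_pos' (fun i _ => by positivity)
    ⟨j, Finset.mem_univ j, by positivity⟩
  have hAnn : 0 ≤ A := Finset.sum_nonneg fun i _ => hρ i
  have hCnn : 0 ≤ C := Finset.sum_nonneg fun i _ => pow_nonneg (hρ i) 3
  have h1 : B ^ 2 ≤ A * C := by
    have := Finset.sum_mul_sq_le_sq_mul_sq Finset.univ
      (fun i => Real.sqrt (ρ i)) (fun i => ρ i * Real.sqrt (ρ i))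
    calc B ^ 2 = (∑ i, Real.sqrt (ρ i) * (ρ i * Real.sqrt (ρ i))) ^ 2 := by
          congr 1; apply Finset.sum_congr rfl; intro i _
          rw [show Real.sqrt (ρ i) * (ρ i * Real.sqrt (ρ i))
              = (Real.sqrt (ρ i) * Real.sqrt (ρ i)) * ρ i by ring,
            Real.mul_self_sqrt (hρ i)]; ring
      _ ≤ (∑ i, Real.sqrt (ρ i) ^ 2) * (∑ i, (ρ i * Real.sqrt (ρ i)) ^ 2) := this
      _ = A * C := by
          congr 1
          · apply Finset.sum_congr rfl; intro i _; exact Real.sq_sqrt (hρ i)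
          · apply Finset.sum_congr rfl; intro i _
            rw [mul_pow, Real.sq_sqrt (hρ i)]; ring
  have h2 : C ^ 2 ≤ B * D := by
    have := Finset.sum_mul_sq_le_sq_mul_sq Finset.univ (fun i => ρ i) (fun i => (ρ i) ^ 2)
    calc C ^ 2 = (∑ i, ρ i * (ρ i) ^ 2) ^ 2 := by
          congr 1; apply Finset.sum_congr rfl; intro i _; ring
      _ ≤ (∑ i, (ρ i) ^ 2) * (∑ i, ((ρ i) ^ 2) ^ 2) := this
      _ = B * D := by
          congr 1; apply Finset.sum_congr rfl; intro i _; ring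
  rw [div_le_div_iff₀ hDpos hBpos]
  -- goal: B ^ 2 * B ≤ A ^ 2 * D
  have key : B ^ 4 ≤ A ^ 2 * (B * D) := by
    calc B ^ 4 = (B ^ 2) ^ 2 := by ring
      _ ≤ (A * C) ^ 2 := by
          apply pow_le_pow_left₀ (sq_nonneg _) h1
      _ = A ^ 2 * C ^ 2 := by ring
      _ ≤ A ^ 2 * (B * D) := by
          exact mul_le_mul_of_nonneg_left h2 (by positivity)
  nlinarith [hBpos, key]
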